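/- arXiv:2105.11026 — 2 statements merged into one kernel-verified Lean document; each statement's English description precedes it below -/
import Mathlib

section
/- Let k ≥ 2, let η ≥ 0, let A_1, ..., A_{k+1} be strictly positive reals with ∑ A_j = 1, and let k_1, ..., k_{k+1} be positive integers with ∑ k_j = 2k, such that A_j + 2η(k_j - 1) = λ is independent of j. Then η < 1/4. -/
/-- An η-monotone link on the unit-area sphere with `k ≥ 2` components forces
the bulk parameter to satisfy `η < 1/4`. -/
theorem eta_lt_quarter (k : ℕ) (hk : 2 ≤ k) (η : ℝ) (hη : 0 ≤ η)
    (A : Fin (k + 1) → ℝ) (hApos : ∀ j, 0 < A j) (hA : ∑ j, A j = 1)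
    (kj : Fin (k + 1) → ℕ) (hkj : ∀ j, 1 ≤ kj j)
    (hsum : ∑ j, kj j = 2 * k)
    (lam : ℝ) (hmono : ∀ j, A j + 2 * η * ((kj j : ℝ) - 1) = lam) :
    η < 1 / 4 := by
  obtain ⟨j0, hj0⟩ : ∃ j, 2 ≤ kj j := by
    by_contra h
    push_neg at h
    have h1 : ∀ j, kj j = 1 := fun j => by have := h j; have := hkj j; omega
    rw [Finset.sum_congr rfl fun j _ => h1 j] at hsum
    simp at hsum
    omega
  have hkR : ∑ j, ((kj j : ℝ)) = 2 * k := by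
    rw [← Nat.cast_sum, hsum]; push_cast; ring
  have key : 1 + 2 * η * ((k : ℝ) - 1) = ((k : ℝ) + 1) * lam := by
    have hs : ∑ j, (A j + 2 * η * ((kj j : ℝ) - 1)) = ((k : ℝ) + 1) * lam := by
      rw [Finset.sum_congr rfl fun j _ => hmono j]
      simp [Finset.sum_const, Finset.card_univ]
    have hmul : ∑ j, (2 * η * ((kj j : ℝ) - 1)) = 2 * η * (∑ j, ((kj j : ℝ) - 1)) :=
      (Finset.mul_sum _ _ _).symm
    rw [Finset.sum_add_distrib, hA, hmul, Finset.sum_sub_distrib, hkR] at hs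
    simp [Finset.card_univ] at hs
    rw [← hs]; ring
  have h2 : (2 : ℝ) ≤ (kj j0 : ℝ) := by exact_mod_cast hj0
  have hk' : (2 : ℝ) ≤ (k : ℝ) := by exact_mod_cast hk
  have hA0 := hApos j0
  have hm := hmono j0
  nlinarith [mul_nonneg hη (sub_nonneg.mpr h2), mul_nonneg hη (sub_nonneg.mpr hk')]
end

section
/- Let G be a group and c : G → ℝ a function with c(1) = 0, c(gh) ≤ c(g) + c(h) for all g,h ∈ G, and suppose there exists D ≥ 0 such that c(g) + c(g⁻¹) ≤ D for all g ∈ G. Then μ(g) := lim_{n→∞} c(gⁿ)/n exists for every g ∈ G, and μ is a homogeneous quasimorphism on G with defect at most 2D. -/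
open Filter

/-- Usher's homogenization mechanism: a subadditive function `c : G → ℝ` with
`c(1) = 0` and `c(g) + c(g⁻¹) ≤ D` homogenizes to a homogeneous quasimorphism
`μ(g) = lim c(gⁿ)/n` with defect at most `2D`. -/
theorem homogenization_quasimorphism {G : Type*} [Group G]
    (c : G → ℝ) (hone : c 1 = 0)
    (hsub : ∀ g h : G, c (g * h) ≤ c g + c h)
    (D : ℝ) (hD : 0 ≤ D) (hdual : ∀ g : G, c g + c g⁻¹ ≤ D) :
    ∃ μ : G → ℝ,
      (∀ g : G, Tendsto (fun n : ℕ => c (g ^ n) / n) atTop (nhds (μ g))) ∧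
      (∀ (g : G) (n : ℤ), μ (g ^ n) = n * μ g) ∧
      (∀ g h : G, |μ (g * h) - μ g - μ h| ≤ 2 * D) := by
  -- lower "subadditivity": c g + c h - D ≤ c (g*h)
  have hlow : ∀ g h : G, c g + c h - D ≤ c (g * h) := by
    intro g h
    have h1 : c g ≤ c (g * h) + c h⁻¹ := by simpa using hsub (g * h) h⁻¹
    have h2 := hdual h
    linarith
  have hpow_le : ∀ (g : G) (n : ℕ), c (g ^ n) ≤ n * c g := by
    intro g n
    induction n with
    | zero => simp [hone]
    | succ n ih =>
      have := hsub (g ^ n) g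
      rw [pow_succ]
      push_cast
      linarith
  have hpow_ge : ∀ (g : G) (n : ℕ), (n : ℝ) * (c g - D) ≤ c (g ^ n) := by
    intro g n
    induction n with
    | zero => simp [hone]
    | succ n ih =>
      have := hlow (g ^ n) g
      rw [pow_succ]
      push_cast
      linarith
  have hSub : ∀ g : G, Subadditive (fun n : ℕ => c (g ^ n)) := by
    intro g m n
    simpa [pow_add] using hsub (g ^ m) (g ^ n)
  set μ : G → ℝ := fun g => (hSub g).lim with hμdef
  have hbdd : ∀ g : G, BddBelow (Set.range fun n : ℕ => c (g ^ n) / n) := by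
    intro g
    refine ⟨min 0 (c g - D), ?_⟩
    rintro x ⟨n, rfl⟩
    rcases Nat.eq_zero_or_pos n with h0 | hpos
    · simp [h0, hone]
    · have hn : (0 : ℝ) < n := by exact_mod_cast hpos
      have := hpow_ge g n
      calc min 0 (c g - D) ≤ c g - D := min_le_right _ _
        _ ≤ c (g ^ n) / n := by rw [le_div_iff₀ hn]; linarith
  have htend : ∀ g : G, Tendsto (fun n : ℕ => c (g ^ n) / n) atTop (nhds (μ g)) :=
    fun g => (hSub g).tendsto_lim (hbdd g)
  -- natural homogeneity
  have hnat : ∀ (g : G) (m : ℕ), μ (g ^ m) = m * μ g := by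
    intro g m
    rcases Nat.eq_zero_or_pos m with h0 | hm
    · subst h0
      have h1 : Tendsto (fun n : ℕ => c ((1 : G) ^ n) / n) atTop (nhds 0) := by
        simpa [hone] using (tendsto_const_nhds : Tendsto (fun _ : ℕ => (0:ℝ)) atTop (nhds 0))
      simpa using tendsto_nhds_unique (by simpa using htend 1) h1
    · have hcomp : Tendsto (fun n : ℕ => m * n) atTop atTop :=
        tendsto_atTop_mono (fun n => Nat.le_mul_of_pos_left n hm) tendsto_id
      have key : ∀ n : ℕ, c ((g ^ m) ^ n) / n
          = m * ((fun k : ℕ => c (g ^ k) / k) (m * n)) := by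
        intro n
        rcases Nat.eq_zero_or_pos n with h0 | hn
        · simp [h0, hone]
        · have hm' : ((m : ℝ)) ≠ 0 := Nat.cast_ne_zero.mpr hm.ne'
          have hn' : ((n : ℝ)) ≠ 0 := Nat.cast_ne_zero.mpr hn.ne'
          simp only [← pow_mul]
          push_cast
          field_simp
      have h2 : Tendsto (fun n : ℕ => c ((g ^ m) ^ n) / n) atTop (nhds ((m : ℝ) * μ g)) :=
        Tendsto.congr (fun n => (key n).symm) (((htend g).comp hcomp).const_mul (m : ℝ))
      exact tendsto_nhds_unique (htend (g ^ m)) h2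
  -- inverse
  have hinv : ∀ g : G, μ g⁻¹ = -μ g := by
    intro g
    have hA : Tendsto (fun n : ℕ => -(c (g ^ n) / n)) atTop (nhds (-μ g)) := (htend g).neg
    have hB : Tendsto (fun n : ℕ => D / n - c (g ^ n) / n) atTop (nhds (-μ g)) := by
      have hd : Tendsto (fun n : ℕ => D / n) atTop (nhds 0) :=
        tendsto_const_nhds.div_atTop tendsto_natCast_atTop_atTop
      simpa using hd.sub (htend g)
    have hsum0 : ∀ n : ℕ, 0 ≤ c (g ^ n) + c ((g⁻¹) ^ n) := by
      intro n
      have : c ((g ^ n) * (g ^ n)⁻¹) ≤ c (g ^ n) + c ((g ^ n)⁻¹) := hsub _ _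
      simp only [mul_inv_cancel, hone] at this
      simpa [inv_pow] using this
    have hsumD : ∀ n : ℕ, c (g ^ n) + c ((g⁻¹) ^ n) ≤ D := by
      intro n
      simpa [inv_pow] using hdual (g ^ n)
    refine tendsto_nhds_unique (htend g⁻¹)
      (tendsto_of_tendsto_of_tendsto_of_le_of_le' hA hB ?_ ?_)
    · filter_upwards [eventually_ge_atTop 1] with n hn
      have hn' : (0 : ℝ) < n := by exact_mod_cast hn
      rw [neg_le, ← neg_div, div_le_div_iff_of_pos_right hn']
      linarith [hsum0 n]
    · filter_upwards [eventually_ge_atTop 1] with n hn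
      have hn' : (0 : ℝ) < n := by exact_mod_cast hn
      rw [div_sub_div_same, div_le_div_iff₀ hn' hn']
      nlinarith [hsumD n]
  -- integer homogeneity
  have hzpow : ∀ (g : G) (n : ℤ), μ (g ^ n) = n * μ g := by
    intro g n
    rcases n with m | m
    · simpa using hnat g m
    · rw [zpow_negSucc, hinv, hnat]
      push_cast
      ring
  -- comparison with c
  have hμ_le : ∀ g : G, μ g ≤ c g := by
    intro g
    refine le_of_tendsto (htend g) ?_
    filter_upwards [eventually_ge_atTop 1] with n hn
    have hn' : (0 : ℝ) < n := by exact_mod_cast hn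
    rw [div_le_iff₀ hn']
    calc c (g ^ n) ≤ n * c g := hpow_le g n
      _ = c g * n := by ring
  have hμ_ge : ∀ g : G, c g - D ≤ μ g := by
    intro g
    refine ge_of_tendsto (htend g) ?_
    filter_upwards [eventually_ge_atTop 1] with n hn
    have hn' : (0 : ℝ) < n := by exact_mod_cast hn
    rw [le_div_iff₀ hn']
    have := hpow_ge g n
    linarith
  refine ⟨μ, htend, hzpow, ?_⟩
  intro g h
  have h1 : μ (g * h) ≤ c (g * h) := hμ_le _
  have h2 : c (g * h) - D ≤ μ (g * h) := hμ_ge _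
  have h3 := hμ_le g
  have h4 := hμ_ge g
  have h5 := hμ_le h
  have h6 := hμ_ge h
  have h7 := hsub g h
  have h8 := hlow g h
  rw [abs_le]
  constructor <;> linarith
end
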